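/- arXiv:2502.07452 — 2 statements merged into one kernel-verified Lean document; each statement's English description precedes it below -/
import Mathlib

section
/- For any weighted argumentation framework, the weighted max-based semantics equation has a unique solution with values in [0,1] on acyclic graphs: if the attack relation is well-founded, there is a unique function σ : A → [0,1] with σ(a) = w(a)/(1 + max_{b ∈ Att(a)} σ(b)) (with the max over the empty set taken as 0). -/
/-- On a finite framework whose attack relation is well-founded (acyclic),
the weighted max-based semantics equation has a unique solution `σ : A → [0,1]`,
where `σ(a) = w(a)/(1 + max_{b ∈ Att(a)} σ(b))` with the empty max taken as 0. -/
theorem stmt_3 {A : Type*} [Fintype A] [DecidableEq A]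
    (C : A → A → Prop) [DecidableRel C] (w : A → ℝ)
    (hw : ∀ a, w a ∈ Set.Icc (0:ℝ) 1)
    (hwf : WellFounded (fun b a => C b a)) :
    ∃! σ : A → ℝ, (∀ a, σ a ∈ Set.Icc (0:ℝ) 1) ∧
      (∀ a, σ a = w a / (1 + (Finset.univ.filter (fun b => C b a)).fold max 0 σ)) := by
  set F : A → ℝ := WellFounded.fix hwf (fun a rec =>
    w a / (1 + (Finset.univ.filter (fun b => C b a)).fold max 0
      (fun b => if h : C b a then rec b h else 0))) with hF
  have hFeq : ∀ a, F a = w a / (1 + (Finset.univ.filter (fun b => C b a)).fold max 0 F) := by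
    intro a
    rw [hF, WellFounded.fix_eq]
    have : Finset.fold max 0
        (fun b => if h : C b a then WellFounded.fix hwf (fun a rec =>
          w a / (1 + (Finset.univ.filter (fun b => C b a)).fold max 0
            (fun b => if h : C b a then rec b h else 0))) b else 0)
        (Finset.univ.filter (fun b => C b a)) =
        Finset.fold max 0 F (Finset.univ.filter (fun b => C b a)) := by
      apply Finset.fold_congr
      intro b hb
      simp only [Finset.mem_filter] at hb
      rw [dif_pos hb.2, hF]
    rw [this]
  have hfold_nonneg : ∀ (f : A → ℝ) (s : Finset A), (0:ℝ) ≤ s.fold max 0 f := by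
    intro f s
    exact (Finset.le_fold_max 0).mpr (Or.inl le_rfl)
  have hbounds : ∀ a, F a ∈ Set.Icc (0:ℝ) 1 := by
    intro a
    have hm := hfold_nonneg F (Finset.univ.filter (fun b => C b a))
    have hpos : (0:ℝ) < 1 + (Finset.univ.filter (fun b => C b a)).fold max 0 F := by linarith
    constructor
    · rw [hFeq a]; exact div_nonneg (hw a).1 hpos.le
    · rw [hFeq a]
      rw [div_le_one hpos]
      have := (hw a).2
      linarith
  refine ⟨F, ⟨hbounds, hFeq⟩, ?_⟩
  rintro τ ⟨hτb, hτeq⟩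
  funext a
  induction a using hwf.induction with
  | _ a ih =>
    rw [hτeq a, hFeq a]
    congr 2
    exact Finset.fold_congr (fun b hb => ih b (Finset.mem_filter.mp hb).2)
end

section
/- The converse of the previous implication fails: there exists a finite directed graph and a vector p ∈ [0,1]ⁿ that is max-based-realizable but not h-categorizer-realizable. For example, with three arguments b, c attacking a and p_a = p_b = p_c = 0.6: max-based requires 0.6·(1+0.6) = 0.96 ≤ 1 (realizable), but h-categorizer requires 0.6·(1+1.2) = 1.32 > 1 (not realizable). -/
/-- Attack structure on three arguments `a = 0`, `b = 1`, `c = 2`: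
`b` and `c` attack `a`. -/
def att16 : Fin 3 → Finset (Fin 3) := fun j => if j = 0 then {1, 2} else ∅

/-- The converse fails: with `b, c` attacking `a` and `p = (0.6, 0.6, 0.6)`,
`p` is max-based-realizable but not h-categorizer-realizable. -/
theorem stmt_16 :
    (∀ j, (fun _ : Fin 3 => (0.6:ℝ)) j ∈ Set.Icc (0:ℝ) 1) ∧
    (∀ j, (0.6:ℝ) * (1 + (att16 j).fold max 0 (fun _ => (0.6:ℝ))) ≤ 1) ∧
    ¬ (∀ j, (0.6:ℝ) * (1 + ∑ _k ∈ att16 j, (0.6:ℝ)) ≤ 1) := by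
  refine ⟨fun j => by norm_num, fun j => ?_, fun h => ?_⟩
  · fin_cases j <;> simp [att16, Finset.fold, Multiset.fold] <;> norm_num [max_def]
  · have := h 0
    simp [att16] at this
    norm_num at this
end
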